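/- Let M = [[a,b],[c,d]] be a 2×2 integer matrix with determinant D = ad − bc ≠ 0, and let f ∈ ℤ[x] be nonzero. If deg(μ_M(f)) = deg f, then μ_{M^{adj}}(μ_M(f)) = D^{deg f} · f, where M^{adj} = [[d,−b],[−c,a]] is the classical adjoint of M. -/

import Mathlib

/-- The Möbius transform of `f` induced by the matrix `[[a,b],[c,d]]`:
`μ_M(f) = Σ_{j≤n} f_j (ax+b)^j (cx+d)^(n-j)` where `n = deg f`. -/
noncomputable def mobius (a b c d : ℤ) (f : Polynomial ℤ) : Polynomial ℤ :=
  ∑ j ∈ Finset.range (f.natDegree + 1),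
    Polynomial.C (f.coeff j) * (Polynomial.C a * Polynomial.X + Polynomial.C b) ^ j *
      (Polynomial.C c * Polynomial.X + Polynomial.C d) ^ (f.natDegree - j)

open Polynomial in
lemma mobius_eval {K : Type*} [Field K] (a b c d : ℤ) (x : K) (p : Polynomial ℤ)
    (hW : (c : K) * x + d ≠ 0) :
    Polynomial.eval₂ (Int.castRingHom K) x (mobius a b c d p) =
      ((c : K) * x + d) ^ p.natDegree *
        Polynomial.eval₂ (Int.castRingHom K) (((a : K) * x + b) / ((c : K) * x + d)) p := by
  unfold mobius
  rw [Polynomial.eval₂_finset_sum,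
    Polynomial.eval₂_eq_sum_range' (Int.castRingHom K) (Nat.lt_succ_self _), Finset.mul_sum]
  apply Finset.sum_congr rfl
  intro j hj
  have hj' : j ≤ p.natDegree := Nat.lt_succ_iff.mp (Finset.mem_range.mp hj)
  simp only [Polynomial.eval₂_mul, Polynomial.eval₂_pow, Polynomial.eval₂_add,
    Polynomial.eval₂_C, Polynomial.eval₂_X]
  simp only [eq_intCast, div_pow]
  rw [show p.natDegree = j + (p.natDegree - j) from (Nat.add_sub_cancel' hj').symm, pow_add]
  have hWj : ((c : K) * x + d) ^ j ≠ 0 := pow_ne_zero _ hW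
  have hWj' : (x * (c : K) + d) ^ j ≠ 0 := by rwa [mul_comm x]
  rw [Nat.add_sub_cancel_left]
  field_simp

open Polynomial


/-- If `det M ≠ 0` and `deg(μ_M(f)) = deg f`, then applying the pseudo-inverse
(the Möbius transform for the classical adjoint `[[d,-b],[-c,a]]`)
recovers `D^(deg f) · f` where `D = det M`. -/
theorem stmt6 (a b c d : ℤ) (hdet : a * d - b * c ≠ 0) (f : Polynomial ℤ) (hf : f ≠ 0)
    (hdeg : (mobius a b c d f).natDegree = f.natDegree) :
    mobius d (-b) (-c) a (mobius a b c d f) =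
      Polynomial.C ((a * d - b * c) ^ f.natDegree) * f := by
  set n := f.natDegree with hn
  set g := mobius a b c d f with hg
  set K := FractionRing (Polynomial ℤ)
  set φ : Polynomial ℤ →+* K := algebraMap (Polynomial ℤ) K with hφ
  have hinj : Function.Injective φ := IsFractionRing.injective _ _
  apply hinj
  set x : K := φ X with hx
  have hphi : ∀ q : Polynomial ℤ, φ q = Polynomial.eval₂ (Int.castRingHom K) x q := by
    intro q
    conv_lhs => rw [← Polynomial.eval₂_C_X (p := q)]
    rw [Polynomial.hom_eval₂]
    congr 1
    exact RingHom.ext_int _ _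
  have hC : ∀ m : ℤ, φ (C m) = (m : K) := fun m => by
    rw [← map_intCast φ m]
    congr 1
  -- W ≠ 0
  have hWpoly : (C (-c) * X + C a : Polynomial ℤ) ≠ 0 := by
    intro h
    have h1 : -c = 0 := by
      have := congrArg (fun p => Polynomial.coeff p 1) h
      simp only [Polynomial.coeff_add, Polynomial.coeff_C_mul, Polynomial.coeff_X_one,
        Polynomial.coeff_C, Polynomial.coeff_zero] at this
      simpa using this
    have h0 : a = 0 := by
      have := congrArg (fun p => Polynomial.coeff p 0) h
      simp only [Polynomial.coeff_add, Polynomial.coeff_C_mul, Polynomial.coeff_X_zero,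
        Polynomial.coeff_C, Polynomial.coeff_zero] at this
      simpa using this
    apply hdet
    rw [h0]
    simp [show c = 0 by omega]
  have hW : ((-c : ℤ) : K) * x + ((a : ℤ) : K) ≠ 0 := by
    intro h
    apply hWpoly
    apply hinj
    rw [map_add, map_mul, hC, hC, map_zero, ← hx]
    exact h
  set W : K := ((-c : ℤ) : K) * x + ((a : ℤ) : K) with hWdef
  set v : K := (((d : ℤ) : K) * x + ((-b : ℤ) : K)) / W with hv
  have hD : ((a * d - b * c : ℤ) : K) ≠ 0 := by
    simpa using fun h => hdet (by exact_mod_cast (Int.cast_injective (α := K)) |>.eq_iff.mp (by push_cast; exact_mod_cast h))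
  -- value of c*v+d and a*v+b
  have hcv : ((c : ℤ) : K) * v + ((d : ℤ) : K) = ((a * d - b * c : ℤ) : K) / W := by
    rw [hv, mul_div_assoc', div_add' _ _ _ hW]
    congr 1
    rw [hWdef]
    push_cast
    erw [Int.cast_mul, Int.cast_mul]
    ring
  have hav : ((a : ℤ) : K) * v + ((b : ℤ) : K) = ((a * d - b * c : ℤ) : K) * x / W := by
    rw [hv, mul_div_assoc', div_add' _ _ _ hW]
    congr 1
    rw [hWdef]
    push_cast
    rw [show ((a * d : ℤ) : K) = (a : K) * d from map_mul (Int.castRingHom K) a d,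
      show ((b * c : ℤ) : K) = (b : K) * c from map_mul (Int.castRingHom K) b c]
    ring
  have hcv0 : ((c : ℤ) : K) * v + ((d : ℤ) : K) ≠ 0 := by
    rw [hcv]
    exact div_ne_zero hD hW
  have hratio : (((a : ℤ) : K) * v + ((b : ℤ) : K)) / (((c : ℤ) : K) * v + ((d : ℤ) : K)) = x := by
    have hD' : ((a : K) * d - b * c) ≠ 0 := by have h := hD; rw [Int.cast_sub, show ((a * d : ℤ) : K) = (a : K) * d from map_mul (Int.castRingHom K) a d, show ((b * c : ℤ) : K) = (b : K) * c from map_mul (Int.castRingHom K) b c] at h; exact h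
    rw [hcv, hav, div_div_div_cancel_right₀ hW, mul_div_cancel_left₀ x hD]
  calc φ (mobius d (-b) (-c) a g)
      = Polynomial.eval₂ (Int.castRingHom K) x (mobius d (-b) (-c) a g) := hphi _
    _ = W ^ g.natDegree * Polynomial.eval₂ (Int.castRingHom K) v g :=
        mobius_eval d (-b) (-c) a x g hW
    _ = W ^ n * (((c : ℤ) : K) * v + ((d : ℤ) : K)) ^ n *
          Polynomial.eval₂ (Int.castRingHom K) x f := by
        rw [hdeg, mobius_eval a b c d v f hcv0, hratio, ← hn, mul_assoc]
    _ = ((a * d - b * c : ℤ) : K) ^ n * Polynomial.eval₂ (Int.castRingHom K) x f := by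
        rw [hcv, div_pow, mul_div_assoc', mul_div_cancel_left₀ _ (pow_ne_zero n hW)]
    _ = φ (Polynomial.C ((a * d - b * c) ^ n) * f) := by
        rw [map_mul, hC, hphi f]
        push_cast
        ring
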